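/- Let n ∈ ℕ, h ∈ ℕ with h ≥ 1, let P ∈ ℝ^{n×n} be a positive semidefinite symmetric matrix with operator norm ‖P‖, let J, Y ∈ ℝ^{n×n}, μ₁, μ₂ > 0, and κ, λ ∈ (0,1). Define the 2n×2n symmetric block matrix Λ with blocks Λ₁₁ = (1+μ₁)·JᵀPJ + λ(κ−1)·P, Λ₁₂ = JᵀPY, Λ₂₁ = YᵀPJ, Λ₂₂ = (1+μ₂)·YᵀPY − κλ^{h+1}·P. If Λ is negative semidefinite, then for all x, x_h, w ∈ ℝⁿ: (Jx + Yx_h + w)ᵀ P (Jx + Yx_h + w) + λ(κ−1)·xᵀPx − κλ^{h+1}·x_hᵀPx_h ≤ (1 + 1/μ₁ + 1/μ₂)·‖P‖·‖w‖². -/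

import Mathlib

open Matrix
open scoped Matrix.Norms.L2Operator

section aux
variable {n : ℕ}

lemma dot_symm (P : Matrix (Fin n) (Fin n) ℝ) (hP : P.IsHermitian)
    (a w : Fin n → ℝ) : w ⬝ᵥ (P *ᵥ a) = a ⬝ᵥ (P *ᵥ w) := by
  have hPt : Pᵀ = P := by
    have := hP.eq
    simpa [conjTranspose_eq_transpose_of_trivial] using this
  rw [dotProduct_mulVec, ← hPt, vecMul_transpose, hPt, dotProduct_comm]

lemma psd_nonneg (P : Matrix (Fin n) (Fin n) ℝ) (hP : P.PosSemidef)
    (v : Fin n → ℝ) : 0 ≤ v ⬝ᵥ (P *ᵥ v) := by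
  have := hP.dotProduct_mulVec_nonneg v
  simpa using this

lemma young (P : Matrix (Fin n) (Fin n) ℝ) (hP : P.PosSemidef)
    {μ : ℝ} (hμ : 0 < μ) (a w : Fin n → ℝ) :
    2 * (a ⬝ᵥ (P *ᵥ w)) ≤ μ * (a ⬝ᵥ (P *ᵥ a)) + μ⁻¹ * (w ⬝ᵥ (P *ᵥ w)) := by
  have h0 := psd_nonneg P hP (μ • a - w)
  have hsym := dot_symm P hP.1 a w
  rw [mulVec_sub, mulVec_smul, sub_dotProduct, smul_dotProduct,
    dotProduct_sub, dotProduct_smul, dotProduct_sub, dotProduct_smul] at h0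
  simp only [smul_eq_mul] at h0
  rw [hsym] at h0
  have key : μ * (2 * (a ⬝ᵥ (P *ᵥ w))) ≤ μ * (μ * (a ⬝ᵥ (P *ᵥ a)) + μ⁻¹ * (w ⬝ᵥ (P *ᵥ w))) := by
    have hrhs : μ * (μ * (a ⬝ᵥ (P *ᵥ a)) + μ⁻¹ * (w ⬝ᵥ (P *ᵥ w)))
        = μ * μ * (a ⬝ᵥ (P *ᵥ a)) + (w ⬝ᵥ (P *ᵥ w)) := by
      field_simp
    rw [hrhs]; linarith
  exact le_of_mul_le_mul_left key hμ

lemma dot_le_norm (P : Matrix (Fin n) (Fin n) ℝ) (hP : P.PosSemidef)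
    (w : Fin n → ℝ) :
    w ⬝ᵥ (P *ᵥ w) ≤ ‖P‖ * ‖(WithLp.equiv 2 (Fin n → ℝ)).symm w‖ ^ 2 := by
  have h1 := P.l2_opNorm_mulVec ((WithLp.equiv 2 (Fin n → ℝ)).symm w)
  have h2 : w ⬝ᵥ (P *ᵥ w)
      = inner ℝ ((WithLp.equiv 2 (Fin n → ℝ)).symm w)
        ((WithLp.equiv 2 (Fin n → ℝ)).symm (P *ᵥ w)) := by
    simp [PiLp.inner_apply, dotProduct, mul_comm]
  have h3 := real_inner_le_norm ((WithLp.equiv 2 (Fin n → ℝ)).symm w)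
    ((WithLp.equiv 2 (Fin n → ℝ)).symm (P *ᵥ w))
  have hw : (0:ℝ) ≤ ‖(WithLp.equiv 2 (Fin n → ℝ)).symm w‖ := norm_nonneg _
  have h1' : ‖(WithLp.equiv 2 (Fin n → ℝ)).symm (P *ᵥ w)‖
      ≤ ‖P‖ * ‖(WithLp.equiv 2 (Fin n → ℝ)).symm w‖ := h1
  calc w ⬝ᵥ (P *ᵥ w) ≤ ‖(WithLp.equiv 2 (Fin n → ℝ)).symm w‖
        * ‖(WithLp.equiv 2 (Fin n → ℝ)).symm (P *ᵥ w)‖ := by rw [h2]; exact h3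
    _ ≤ ‖(WithLp.equiv 2 (Fin n → ℝ)).symm w‖
        * (‖P‖ * ‖(WithLp.equiv 2 (Fin n → ℝ)).symm w‖) := by
        exact mul_le_mul_of_nonneg_left h1' hw
    _ = ‖P‖ * ‖(WithLp.equiv 2 (Fin n → ℝ)).symm w‖ ^ 2 := by ring

end aux

theorem stmt11
    (n h : ℕ) (hh : 1 ≤ h)
    (P : Matrix (Fin n) (Fin n) ℝ) (hP : P.PosSemidef)
    (J Y : Matrix (Fin n) (Fin n) ℝ)
    (μ₁ μ₂ κ lam : ℝ) (hμ₁ : 0 < μ₁) (hμ₂ : 0 < μ₂)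
    (hκ0 : 0 < κ) (hκ1 : κ < 1) (hlam0 : 0 < lam) (hlam1 : lam < 1)
    (Λ : Matrix (Fin n ⊕ Fin n) (Fin n ⊕ Fin n) ℝ)
    (hΛ : Λ = fromBlocks
      ((1 + μ₁) • (Jᵀ * P * J) + (lam * (κ - 1)) • P)
      (Jᵀ * P * Y)
      (Yᵀ * P * J)
      ((1 + μ₂) • (Yᵀ * P * Y) - (κ * lam ^ (h + 1)) • P))
    (hNSD : (-Λ).PosSemidef) :
    ∀ x xh w : Fin n → ℝ,
      (J *ᵥ x + Y *ᵥ xh + w) ⬝ᵥ (P *ᵥ (J *ᵥ x + Y *ᵥ xh + w))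
          + lam * (κ - 1) * (x ⬝ᵥ (P *ᵥ x))
          - κ * lam ^ (h + 1) * (xh ⬝ᵥ (P *ᵥ xh)) ≤
        (1 + 1 / μ₁ + 1 / μ₂) * ‖P‖ * ‖(WithLp.equiv 2 (Fin n → ℝ)).symm w‖ ^ 2 := by
  intro x xh w
  set a := J *ᵥ x with ha
  set b := Y *ᵥ xh with hb
  -- quadratic form of Λ at (x, xh) is ≤ 0
  have hz : Sum.elim x xh ⬝ᵥ (Λ *ᵥ Sum.elim x xh) ≤ 0 := by
    have := hNSD.dotProduct_mulVec_nonneg (Sum.elim x xh)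
    simp only [star_trivial, neg_mulVec, dotProduct_neg] at this
    linarith
  -- compute that quadratic form
  have hzval : Sum.elim x xh ⬝ᵥ (Λ *ᵥ Sum.elim x xh)
      = (1 + μ₁) * (a ⬝ᵥ (P *ᵥ a)) + lam * (κ - 1) * (x ⬝ᵥ (P *ᵥ x))
        + 2 * (a ⬝ᵥ (P *ᵥ b))
        + (1 + μ₂) * (b ⬝ᵥ (P *ᵥ b)) - κ * lam ^ (h + 1) * (xh ⬝ᵥ (P *ᵥ xh)) := by
    have e1 : ∀ v : Fin n → ℝ, x ⬝ᵥ (Jᵀ *ᵥ v) = a ⬝ᵥ v := fun v => by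
      rw [dotProduct_mulVec, vecMul_transpose]
    have e2 : ∀ v : Fin n → ℝ, xh ⬝ᵥ (Yᵀ *ᵥ v) = b ⬝ᵥ v := fun v => by
      rw [dotProduct_mulVec, vecMul_transpose]
    have hba : b ⬝ᵥ (P *ᵥ a) = a ⬝ᵥ (P *ᵥ b) := dot_symm P hP.1 a b
    rw [hΛ, fromBlocks_mulVec, sumElim_dotProduct_sumElim]
    simp only [Sum.elim_comp_inl, Sum.elim_comp_inr, add_mulVec, sub_mulVec,
      smul_mulVec, dotProduct_add, dotProduct_sub, dotProduct_smul, smul_eq_mul,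
      ← mulVec_mulVec]
    rw [e1, e1, e2, e2, ← ha, ← hb, hba]
    ring
  -- Young's inequalities
  have hy1 := young P hP hμ₁ a w
  have hy2 := young P hP hμ₂ b w
  -- expand main quadratic form
  have hexp : (a + b + w) ⬝ᵥ (P *ᵥ (a + b + w))
      = a ⬝ᵥ (P *ᵥ a) + b ⬝ᵥ (P *ᵥ b) + w ⬝ᵥ (P *ᵥ w)
        + 2 * (a ⬝ᵥ (P *ᵥ b)) + 2 * (a ⬝ᵥ (P *ᵥ w)) + 2 * (b ⬝ᵥ (P *ᵥ w)) := by
    have hba : b ⬝ᵥ (P *ᵥ a) = a ⬝ᵥ (P *ᵥ b) := dot_symm P hP.1 a b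
    have hwa : w ⬝ᵥ (P *ᵥ a) = a ⬝ᵥ (P *ᵥ w) := dot_symm P hP.1 a w
    have hwb : w ⬝ᵥ (P *ᵥ b) = b ⬝ᵥ (P *ᵥ w) := dot_symm P hP.1 b w
    simp only [mulVec_add, dotProduct_add, add_dotProduct]
    rw [hba, hwa, hwb]; ring
  have hnorm := dot_le_norm P hP w
  have hPnn : (0:ℝ) ≤ ‖P‖ := norm_nonneg _
  have h1 : (1:ℝ)/μ₁ = μ₁⁻¹ := one_div _
  have h2 : (1:ℝ)/μ₂ = μ₂⁻¹ := one_div _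
  have key : (a + b + w) ⬝ᵥ (P *ᵥ (a + b + w))
        + lam * (κ - 1) * (x ⬝ᵥ (P *ᵥ x))
        - κ * lam ^ (h + 1) * (xh ⬝ᵥ (P *ᵥ xh))
      ≤ (1 + μ₁⁻¹ + μ₂⁻¹) * (w ⬝ᵥ (P *ᵥ w)) := by
    rw [hexp]
    nlinarith [hz, hzval, hy1, hy2]
  have hfinal : (1 + μ₁⁻¹ + μ₂⁻¹) * (w ⬝ᵥ (P *ᵥ w))
      ≤ (1 + 1/μ₁ + 1/μ₂) * ‖P‖ * ‖(WithLp.equiv 2 (Fin n → ℝ)).symm w‖ ^ 2 := by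
    rw [h1, h2, mul_assoc]
    have hc : (0:ℝ) ≤ 1 + μ₁⁻¹ + μ₂⁻¹ := by positivity
    exact mul_le_mul_of_nonneg_left hnorm hc
  calc _ ≤ (1 + μ₁⁻¹ + μ₂⁻¹) * (w ⬝ᵥ (P *ᵥ w)) := key
    _ ≤ _ := hfinal
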